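/- If f is a monotone graph parameter that is unbounded on the stars K_{1,k}, then every class of graphs that is fractionally f-fragile (at some rate) has bounded maximum degree. Concretely: if f(K_{1,k}) > r(3) and G is fractionally f-fragile at rate r, then the maximum degree of G is at most 3k−3. -/

import Mathlib

/-- A graph parameter: a real-valued function on finite graphs. -/
abbrev GraphParam := ∀ (V : Type) [Fintype V], SimpleGraph V → ℝ

/-- `G` is fractionally `f`-fragile at rate `r`: for every positive integer `a`
there is a `(1/a)`-thin probability distribution on subsets `X` of `V(G)`
supported on sets with `f (G - X) ≤ r a`. -/
def FracFragile (f : GraphParam) {V : Type} [Fintype V] [DecidableEq V]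
    (G : SimpleGraph V) (r : ℕ → ℝ) : Prop :=
  ∀ a : ℕ, 0 < a → ∃ P : Finset V → ℝ,
    (∀ X, 0 ≤ P X) ∧ (∑ X : Finset V, P X = 1) ∧
    (∀ X : Finset V, P X ≠ 0 → f _ (G.induce (↑(Xᶜ) : Set V)) ≤ r a) ∧
    (∀ v : V, ∑ X ∈ Finset.univ.filter (fun X : Finset V => v ∈ X), P X ≤ 1 / (a : ℝ))

/-- A graph parameter is monotone if it does not decrease when passing to
supergraphs, i.e. `f H ≤ f G` whenever `H` is isomorphic to a subgraph of `G`. -/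
def MonotoneParam (f : GraphParam) : Prop :=
  ∀ {V W : Type} [Fintype V] [Fintype W] (H : SimpleGraph V) (G : SimpleGraph W)
    (φ : V → W), Function.Injective φ → (∀ u v, H.Adj u v → G.Adj (φ u) (φ v)) →
    f _ H ≤ f _ G

/-- If `f` is a monotone graph parameter with `f(K_{1,k}) > r 3`, then every graph
that is fractionally `f`-fragile at rate `r` has maximum degree at most `3k - 3`. -/
theorem frac_fragile_bounded_degree (f : GraphParam) (hf : MonotoneParam f)
    (r : ℕ → ℝ) (hr : Monotone r) (k : ℕ) (hk : 1 ≤ k)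
    (hstar : r 3 < f _ (completeBipartiteGraph (Fin 1) (Fin k)))
    {V : Type} [Fintype V] [DecidableEq V] (G : SimpleGraph V) [DecidableRel G.Adj]
    (hG : FracFragile f G r) :
    ∀ v : V, G.degree v ≤ 3 * k - 3 := by
  intro v
  by_contra hdeg
  push_neg at hdeg
  set d := G.degree v with hd
  have hd2 : 3 * k - 2 ≤ d := by omega
  obtain ⟨P, hP0, hPsum, hPle, hthin⟩ := hG 3 (by norm_num)
  set N := G.neighborFinset v with hN
  have hNcard : N.card = d := G.card_neighborFinset_eq_degree v
  -- key existence of a good set X in the support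
  have key : ∃ X : Finset V, P X ≠ 0 ∧ v ∉ X ∧ (N ∩ X).card + k ≤ d := by
    by_contra hcon
    push_neg at hcon
    -- lower bound on the expected "damage"
    have hlow : ∀ X : Finset V, P X ≠ 0 →
        ((d : ℝ) + 1 - k) ≤ ((if v ∈ X then (d : ℝ) else 0) + ((N ∩ X).card : ℝ)) := by
      intro X hX
      by_cases hvX : v ∈ X
      · simp only [hvX, if_true]
        have : (0:ℝ) ≤ ((N ∩ X).card : ℝ) := by positivity
        have hk1 : (1:ℝ) ≤ (k:ℝ) := by exact_mod_cast hk
        linarith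
      · have h1 : d + 1 ≤ (N ∩ X).card + k := hcon X hX hvX
        have : (d : ℝ) + 1 ≤ ((N ∩ X).card : ℝ) + k := by exact_mod_cast h1
        simp only [hvX, if_false]
        linarith
    have hE1 : ((d : ℝ) + 1 - k) ≤
        ∑ X : Finset V, P X * ((if v ∈ X then (d : ℝ) else 0) + ((N ∩ X).card : ℝ)) := by
      calc ((d : ℝ) + 1 - k) = ∑ X : Finset V, P X * ((d : ℝ) + 1 - k) := by
            rw [← Finset.sum_mul, hPsum, one_mul]
        _ ≤ _ := by
            apply Finset.sum_le_sum
            intro X _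
            by_cases hX : P X = 0
            · simp [hX]
            · exact mul_le_mul_of_nonneg_left (hlow X hX) (hP0 X)
    -- upper bound on the expectation
    have hEa : ∑ X : Finset V, P X * (if v ∈ X then (d : ℝ) else 0) ≤ (d : ℝ) / 3 := by
      have : ∑ X : Finset V, P X * (if v ∈ X then (d : ℝ) else 0)
          = (∑ X ∈ Finset.univ.filter (fun X : Finset V => v ∈ X), P X) * d := by
        rw [Finset.sum_filter, Finset.sum_mul]
        apply Finset.sum_congr rfl
        intro X _
        split_ifs <;> ring
      rw [this]
      have h3 := hthin v
      have hdnn : (0:ℝ) ≤ (d:ℝ) := by positivity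
      calc (∑ X ∈ Finset.univ.filter (fun X : Finset V => v ∈ X), P X) * d
          ≤ (1 / (3:ℝ)) * d := by
            apply mul_le_mul_of_nonneg_right _ hdnn
            exact_mod_cast h3
        _ = (d : ℝ) / 3 := by ring
    have hEb : ∑ X : Finset V, P X * ((N ∩ X).card : ℝ) ≤ (d : ℝ) / 3 := by
      have hrw : ∀ X : Finset V, P X * ((N ∩ X).card : ℝ)
          = ∑ u ∈ N, (if u ∈ X then P X else 0) := by
        intro X
        have : (N ∩ X) = N.filter (fun u => u ∈ X) := by
          ext u; simp [Finset.mem_inter, Finset.mem_filter]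
        rw [this, Finset.card_filter]
        push_cast
        rw [Finset.mul_sum]
        apply Finset.sum_congr rfl
        intro u _
        split_ifs <;> ring
      calc ∑ X : Finset V, P X * ((N ∩ X).card : ℝ)
          = ∑ X : Finset V, ∑ u ∈ N, (if u ∈ X then P X else 0) := by
            exact Finset.sum_congr rfl (fun X _ => hrw X)
        _ = ∑ u ∈ N, ∑ X : Finset V, (if u ∈ X then P X else 0) := Finset.sum_comm
        _ ≤ ∑ u ∈ N, (1 / (3:ℝ)) := by
            apply Finset.sum_le_sum
            intro u _
            have h3 := hthin u
            rw [← Finset.sum_filter]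
            exact_mod_cast h3
        _ = (N.card : ℝ) * (1/3) := by rw [Finset.sum_const]; push_cast; ring
        _ = (d : ℝ) / 3 := by rw [hNcard]; ring
    have hE2 : ∑ X : Finset V, P X * ((if v ∈ X then (d : ℝ) else 0) + ((N ∩ X).card : ℝ))
        ≤ 2 * (d : ℝ) / 3 := by
      have : ∑ X : Finset V, P X * ((if v ∈ X then (d : ℝ) else 0) + ((N ∩ X).card : ℝ))
          = ∑ X : Finset V, P X * (if v ∈ X then (d : ℝ) else 0)
            + ∑ X : Finset V, P X * ((N ∩ X).card : ℝ) := by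
        rw [← Finset.sum_add_distrib]
        apply Finset.sum_congr rfl
        intro X _; ring
      rw [this]
      linarith
    -- combine
    have hfin : (d : ℝ) + 1 - k ≤ 2 * d / 3 := le_trans hE1 hE2
    have hkd : (d : ℝ) + 3 ≤ 3 * k := by linarith
    have hkd' : d + 3 ≤ 3 * k := by exact_mod_cast hkd
    omega
  obtain ⟨X, hX0, hvX, hcard⟩ := key
  -- at least k neighbors survive
  have hsurv : k ≤ (N \ X).card := by
    have := Finset.card_sdiff_add_card_inter N X
    omega
  obtain ⟨S, hS, hScard⟩ := Finset.exists_subset_card_eq hsurv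
  let e : S ≃ Fin k := Finset.equivFinOfCardEq hScard
  have hmemS : ∀ i : Fin k, (↑(e.symm i) : V) ∈ N \ X := fun i => hS (e.symm i).2
  have hvmem : v ∈ (↑(Xᶜ) : Set V) := by
    simp only [Finset.coe_compl, Set.mem_compl_iff, Finset.mem_coe]
    exact hvX
  have humem : ∀ i : Fin k, (↑(e.symm i) : V) ∈ (↑(Xᶜ) : Set V) := by
    intro i
    have := hmemS i
    simp only [Finset.mem_sdiff] at this
    simp only [Finset.coe_compl, Set.mem_compl_iff, Finset.mem_coe]
    exact this.2
  have hadjvu : ∀ i : Fin k, G.Adj v (↑(e.symm i) : V) := by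
    intro i
    have := hmemS i
    simp only [Finset.mem_sdiff] at this
    have := this.1
    rwa [hN, SimpleGraph.mem_neighborFinset] at this
  set φ : Fin 1 ⊕ Fin k → (↑(Xᶜ) : Set V) :=
    Sum.elim (fun _ => ⟨v, hvmem⟩) (fun i => ⟨(↑(e.symm i) : V), humem i⟩) with hφ
  have hinj : Function.Injective φ := by
    intro a b hab
    match a, b with
    | Sum.inl a, Sum.inl b => simp [Fin.eq_zero a, Fin.eq_zero b]
    | Sum.inl a, Sum.inr j =>
        exfalso
        simp only [hφ, Sum.elim_inl, Sum.elim_inr, Subtype.mk.injEq] at hab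
        exact (hadjvu j).ne hab
    | Sum.inr i, Sum.inl b =>
        exfalso
        simp only [hφ, Sum.elim_inl, Sum.elim_inr, Subtype.mk.injEq] at hab
        exact (hadjvu i).ne hab.symm
    | Sum.inr i, Sum.inr j =>
        simp only [hφ, Sum.elim_inr, Subtype.mk.injEq] at hab
        have : e.symm i = e.symm j := Subtype.ext hab
        have := e.symm.injective this
        rw [this]
  have hhom : ∀ a b, (completeBipartiteGraph (Fin 1) (Fin k)).Adj a b →
      (G.induce (↑(Xᶜ) : Set V)).Adj (φ a) (φ b) := by
    intro a b hab
    match a, b with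
    | Sum.inl a, Sum.inl b => simp [completeBipartiteGraph] at hab
    | Sum.inr i, Sum.inr j => simp [completeBipartiteGraph] at hab
    | Sum.inl a, Sum.inr j =>
        simp only [hφ, Sum.elim_inl, Sum.elim_inr, SimpleGraph.comap_adj,
          Function.Embedding.coe_subtype]
        exact hadjvu j
    | Sum.inr i, Sum.inl b =>
        simp only [hφ, Sum.elim_inl, Sum.elim_inr, SimpleGraph.comap_adj,
          Function.Embedding.coe_subtype]
        exact (hadjvu i).symm
  have := hf (completeBipartiteGraph (Fin 1) (Fin k)) (G.induce (↑(Xᶜ) : Set V)) φ hinj hhom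
  have := le_trans this (hPle X hX0)
  linarith
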